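/- Let r ≥ 1 and let W be a ℂ-subspace of R^r such that p·P^r ⊆ W ⊆ q⁻¹·P^r for some nonzero polynomials p and q. Then there exists a finite-dimensional subspace C ⊆ 𝒞^(r) such that W = q⁻¹·V_C (equivalently, q·W = V_C), and moreover finrank ℂ C = finrank ℂ ((q⁻¹·P^r) ⧸ W). -/

import Mathlib

open Polynomial

/-- The evaluation functional `e_{k,s,λ}` on `P^r = Fin r → ℂ[X]`. -/
noncomputable def evalFunctional (r : ℕ) (k : Fin r) (s : ℕ) (l : ℂ) :
    Module.Dual ℂ (Fin r → Polynomial ℂ) :=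
  Polynomial.leval l ∘ₗ
    ((Polynomial.derivative : Polynomial ℂ →ₗ[ℂ] Polynomial ℂ) ^ s) ∘ₗ
      LinearMap.proj k

/-- `𝒞^(r)`: the span of all the evaluation functionals. -/
noncomputable def conditionsSpace (r : ℕ) :
    Submodule ℂ (Module.Dual ℂ (Fin r → Polynomial ℂ)) :=
  Submodule.span ℂ
    (Set.range fun ksl : Fin r × ℕ × ℂ => evalFunctional r ksl.1 ksl.2.1 ksl.2.2)

/-- The annihilator `V_C ⊆ P^r` of a space of conditions `C`. -/
noncomputable def annihilatorOfConditions (r : ℕ)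
    (C : Submodule ℂ (Module.Dual ℂ (Fin r → Polynomial ℂ))) :
    Submodule ℂ (Fin r → Polynomial ℂ) where
  carrier := {p | ∀ c ∈ C, c p = 0}
  add_mem' := fun hp hq c hc => by rw [map_add, hp c hc, hq c hc, add_zero]
  zero_mem' := fun c _ => map_zero c
  smul_mem' := fun a p hp c hc => by rw [map_smul, hp c hc, smul_zero]

/-- The componentwise embedding `P^r → R^r` of tuples of polynomials into
tuples of rational functions. -/
noncomputable def polyToRat (r : ℕ) :
    (Fin r → Polynomial ℂ) →ₗ[ℂ] (Fin r → RatFunc ℂ) :=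
  LinearMap.pi fun k =>
    (IsScalarTower.toAlgHom ℂ (Polynomial ℂ) (RatFunc ℂ)).toLinearMap ∘ₗ
      LinearMap.proj k

/-- Componentwise multiplication by a fixed rational function `f` on `R^r`. -/
noncomputable def ratScale (r : ℕ) (f : RatFunc ℂ) :
    (Fin r → RatFunc ℂ) →ₗ[ℂ] (Fin r → RatFunc ℂ) :=
  LinearMap.pi fun k => LinearMap.mulLeft ℂ f ∘ₗ LinearMap.proj k

/-- `P^r` regarded as a subspace of `R^r`. -/
noncomputable def polySubmodule (r : ℕ) : Submodule ℂ (Fin r → RatFunc ℂ) :=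
  LinearMap.range (polyToRat r)

/-- The image `f·U` of a subspace `U ⊆ R^r` under componentwise
multiplication by the rational function `f`. -/
noncomputable def scaleSub (r : ℕ) (f : RatFunc ℂ)
    (U : Submodule ℂ (Fin r → RatFunc ℂ)) : Submodule ℂ (Fin r → RatFunc ℂ) :=
  Submodule.map (ratScale r f) U

/-- `V_C` regarded as a subspace of `R^r`. -/
noncomputable def annihilatorInRat (r : ℕ)
    (C : Submodule ℂ (Module.Dual ℂ (Fin r → Polynomial ℂ))) :
    Submodule ℂ (Fin r → RatFunc ℂ) :=
  Submodule.map (polyToRat r) (annihilatorOfConditions r C)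

lemma aux_mem_span_proj_comp {V ι : Type*} [AddCommGroup V] [Module ℂ V] [Fintype ι]
    (T : V →ₗ[ℂ] (ι → ℂ)) (φ : Module.Dual ℂ V) (h : LinearMap.ker T ≤ LinearMap.ker φ) :
    φ ∈ Submodule.span ℂ (Set.range fun i => (LinearMap.proj i : (ι → ℂ) →ₗ[ℂ] ℂ) ∘ₗ T) := by
  classical
  obtain ⟨g, hg⟩ : ∃ g : (ι → ℂ) →ₗ[ℂ] ℂ, φ = g ∘ₗ T := by
    obtain ⟨g, hg⟩ := LinearMap.exists_extend
      (((LinearMap.ker T).liftQ φ h) ∘ₗ (T.quotKerEquivRange).symm.toLinearMap)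
    refine ⟨g, ?_⟩
    ext v
    have h1 : (T.quotKerEquivRange) (Submodule.Quotient.mk v)
        = ⟨T v, LinearMap.mem_range_self T v⟩ := by
      rfl
    have h2 : (T.quotKerEquivRange).symm ⟨T v, LinearMap.mem_range_self T v⟩
        = Submodule.Quotient.mk v := by
      rw [← h1, LinearEquiv.symm_apply_apply]
    have h3 : g (T v) = g ((LinearMap.range T).subtype ⟨T v, LinearMap.mem_range_self T v⟩) := rfl
    rw [LinearMap.comp_apply, h3, ← LinearMap.comp_apply g, hg, LinearMap.comp_apply,
      LinearEquiv.coe_toLinearMap, h2, Submodule.liftQ_apply]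
  have hφ : φ = ∑ i : ι, g (Pi.single i 1) • ((LinearMap.proj i : (ι → ℂ) →ₗ[ℂ] ℂ) ∘ₗ T) := by
    rw [hg]; ext v
    have hv : T v = ∑ i, T v i • (Pi.single i 1 : ι → ℂ) := by
      funext j
      simp [Pi.single_apply, Finset.sum_apply, mul_ite]
    rw [LinearMap.comp_apply, hv]
    simp only [map_sum, map_smul, LinearMap.sum_apply, LinearMap.smul_apply,
      LinearMap.comp_apply, LinearMap.proj_apply, smul_eq_mul]
    exact Finset.sum_congr rfl fun i _ => mul_comm _ _
  rw [hφ]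
  exact Submodule.sum_mem _ fun i _ => Submodule.smul_mem _ _ (Submodule.subset_span ⟨i, rfl⟩)

lemma aux_dvd_of_derivs {m f : Polynomial ℂ} (hm : m ≠ 0)
    (h : ∀ l ∈ m.roots, ∀ s : ℕ, s ≤ m.natDegree → (Polynomial.derivative^[s] f).eval l = 0) :
    m ∣ f := by
  by_cases hf : f = 0
  · simp [hf]
  have hle : m.roots ≤ f.roots := by
    rw [Multiset.le_iff_count]
    intro l
    rw [count_roots, count_roots]
    rcases Nat.eq_zero_or_pos (rootMultiplicity l m) with h0 | hpos
    · omega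
    have hlr : l ∈ m.roots := by
      rw [mem_roots hm]
      exact (rootMultiplicity_pos hm).mp hpos
    have hdeg : rootMultiplicity l m ≤ m.natDegree := by
      have := Polynomial.natDegree_le_of_dvd (pow_rootMultiplicity_dvd m l) hm
      simpa [natDegree_pow] using this
    have : rootMultiplicity l m - 1 < rootMultiplicity l f := by
      rw [lt_rootMultiplicity_iff_isRoot_iterate_derivative hf]
      intro s hs
      exact h l hlr s (by omega)
    omega
  have hd : (m.roots.map fun a => X - C a).prod ∣ f :=
    (Multiset.prod_X_sub_C_dvd_iff_le_roots hf m.roots).mpr hle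
  obtain ⟨g, hg⟩ := hd
  have hsplit := (IsAlgClosed.splits (k := ℂ) m).eq_prod_roots
  have hlc : m.leadingCoeff ≠ 0 := leadingCoeff_ne_zero.mpr hm
  have key : C m.leadingCoeff⁻¹ * m = (m.roots.map fun a => X - C a).prod := by
    nth_rewrite 2 [hsplit]
    rw [← mul_assoc, ← C_mul, inv_mul_cancel₀ hlc, C_1, one_mul]
  refine ⟨C m.leadingCoeff⁻¹ * g, ?_⟩
  rw [hg, ← key]
  ring

noncomputable def polyScale (r : ℕ) (m : Polynomial ℂ) :
    (Fin r → Polynomial ℂ) →ₗ[ℂ] (Fin r → Polynomial ℂ) :=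
  LinearMap.pi fun k => LinearMap.mulLeft ℂ m ∘ₗ LinearMap.proj k

lemma polyToRat_apply (r : ℕ) (f : Fin r → Polynomial ℂ) (k : Fin r) :
    polyToRat r f k = algebraMap (Polynomial ℂ) (RatFunc ℂ) (f k) := rfl

lemma polyToRat_injective (r : ℕ) : Function.Injective (polyToRat r) := by
  intro f g h
  funext k
  have := congrFun h k
  rw [polyToRat_apply, polyToRat_apply] at this
  exact RatFunc.algebraMap_injective ℂ this

lemma ratScale_apply (r : ℕ) (f : RatFunc ℂ) (x : Fin r → RatFunc ℂ) (k : Fin r) :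
    ratScale r f x k = f * x k := rfl

lemma ratScale_ratScale (r : ℕ) (f g : RatFunc ℂ) (x : Fin r → RatFunc ℂ) :
    ratScale r f (ratScale r g x) = ratScale r (f * g) x := by
  funext k
  simp [ratScale_apply, mul_assoc]

lemma ratScale_one (r : ℕ) (x : Fin r → RatFunc ℂ) : ratScale r 1 x = x := by
  funext k; simp [ratScale_apply]

lemma scaleSub_scaleSub (r : ℕ) (f g : RatFunc ℂ) (U : Submodule ℂ (Fin r → RatFunc ℂ)) :
    scaleSub r f (scaleSub r g U) = scaleSub r (f * g) U := by
  rw [scaleSub, scaleSub, scaleSub, ← Submodule.map_comp]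
  congr 1
  exact LinearMap.ext (ratScale_ratScale r f g)

lemma scaleSub_one (r : ℕ) (U : Submodule ℂ (Fin r → RatFunc ℂ)) : scaleSub r 1 U = U := by
  rw [scaleSub]
  convert Submodule.map_id U using 2
  exact LinearMap.ext (ratScale_one r)

lemma polyToRat_polyScale (r : ℕ) (m : Polynomial ℂ) (f : Fin r → Polynomial ℂ) :
    polyToRat r (polyScale r m f) =
      ratScale r (algebraMap (Polynomial ℂ) (RatFunc ℂ) m) (polyToRat r f) := by
  funext k
  simp [polyToRat_apply, ratScale_apply, polyScale, map_mul]

lemma ratScale_injective (r : ℕ) {f : RatFunc ℂ} (hf : f ≠ 0) :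
    Function.Injective (ratScale r f) := by
  intro x y h
  funext k
  have := congrFun h k
  rw [ratScale_apply, ratScale_apply] at this
  exact mul_left_cancel₀ hf this

noncomputable def rootFinset (m : Polynomial ℂ) : Finset ℂ :=
  @Multiset.toFinset ℂ (Classical.decEq ℂ) m.roots

noncomputable def Efam (r : ℕ) (m : Polynomial ℂ) :
    (Fin r × ({ l // l ∈ rootFinset m } × Fin (m.natDegree + 1))) →
      Module.Dual ℂ (Fin r → Polynomial ℂ) :=
  fun i => evalFunctional r i.1 i.2.2 i.2.1.1

lemma aux_claimA (r : ℕ) (m : Polynomial ℂ) (hm : m ≠ 0)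
    (U' : Submodule ℂ (Fin r → Polynomial ℂ)) (hmU' : ∀ f, polyScale r m f ∈ U')
    (φ : Module.Dual ℂ (Fin r → Polynomial ℂ)) (hφ : ∀ u ∈ U', φ u = 0) :
    φ ∈ Submodule.span ℂ (Set.range (Efam r m)) := by
  classical
  set T : (Fin r → Polynomial ℂ) →ₗ[ℂ] _ := LinearMap.pi (Efam r m) with hTdef
  have hker : LinearMap.ker T ≤ U' := by
    intro f hf
    rw [LinearMap.mem_ker] at hf
    have hdvd : ∀ k : Fin r, m ∣ f k := by
      intro k
      apply aux_dvd_of_derivs hm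
      intro l hl s hs
      have hl' : l ∈ rootFinset m :=
        (@Multiset.mem_toFinset ℂ (Classical.decEq ℂ) _ _).mpr hl
      have h0 := congrFun hf (k, (⟨l, hl'⟩, ⟨s, by omega⟩))
      simpa [hTdef, LinearMap.pi_apply, Efam, evalFunctional, Module.End.pow_apply,
        leval_apply] using h0
    choose g hg using hdvd
    have hfg : polyScale r m g = f := by
      funext k
      exact (hg k).symm
    rw [← hfg]
    exact hmU' g
  have h2 := aux_mem_span_proj_comp T φ
    (fun f hf => LinearMap.mem_ker.mpr (hφ f (hker hf)))
  have hTE : (fun i => (LinearMap.proj i : _ →ₗ[ℂ] ℂ) ∘ₗ T) = Efam r m :=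
    funext fun i => LinearMap.ext fun f => rfl
  rwa [hTE] at h2

lemma Efam_mem_conditions (r : ℕ) (m : Polynomial ℂ) :
    Submodule.span ℂ (Set.range (Efam r m)) ≤ conditionsSpace r := by
  rw [Submodule.span_le]
  rintro _ ⟨i, rfl⟩
  exact Submodule.subset_span ⟨(i.1, i.2.2, i.2.1.1), rfl⟩

lemma mem_annihilatorOfConditions (r : ℕ)
    (C : Submodule ℂ (Module.Dual ℂ (Fin r → Polynomial ℂ)))
    (f : Fin r → Polynomial ℂ) :
    f ∈ annihilatorOfConditions r C ↔ ∀ c ∈ C, c f = 0 := Iff.rfl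

set_option synthInstance.maxHeartbeats 1000000 in
set_option maxHeartbeats 1000000 in
/-- if `p·P^r ⊆ W ⊆ q⁻¹·P^r` for nonzero polynomials `p, q`, then
there is a finite-dimensional space of conditions `C ⊆ 𝒞^(r)` with
`W = q⁻¹·V_C` (equivalently `q·W = V_C`) and
`finrank C = finrank ((q⁻¹·P^r) ⧸ W)`. -/
theorem exists_conditions_of_sandwiched (r : ℕ) (hr : 1 ≤ r)
    (W : Submodule ℂ (Fin r → RatFunc ℂ)) (p q : Polynomial ℂ)
    (hp : p ≠ 0) (hq : q ≠ 0)
    (hpW : scaleSub r (algebraMap (Polynomial ℂ) (RatFunc ℂ) p)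
      (polySubmodule r) ≤ W)
    (hWq : W ≤ scaleSub r (algebraMap (Polynomial ℂ) (RatFunc ℂ) q)⁻¹
      (polySubmodule r)) :
    letI qinvP : Submodule ℂ (Fin r → RatFunc ℂ) :=
      scaleSub r (algebraMap (Polynomial ℂ) (RatFunc ℂ) q)⁻¹ (polySubmodule r)
    ∃ C : Submodule ℂ (Module.Dual ℂ (Fin r → Polynomial ℂ)),
      C ≤ conditionsSpace r ∧ FiniteDimensional ℂ C ∧
      W = scaleSub r (algebraMap (Polynomial ℂ) (RatFunc ℂ) q)⁻¹
            (annihilatorInRat r C) ∧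
      scaleSub r (algebraMap (Polynomial ℂ) (RatFunc ℂ) q) W =
        annihilatorInRat r C ∧
      Module.finrank ℂ C =
        Module.finrank ℂ (↥qinvP ⧸ Submodule.comap qinvP.subtype W) := by
  classical
  have hQ : algebraMap (Polynomial ℂ) (RatFunc ℂ) q ≠ 0 := RatFunc.algebraMap_ne_zero hq
  set Q : RatFunc ℂ := algebraMap (Polynomial ℂ) (RatFunc ℂ) q with hQdef
  set Pp : RatFunc ℂ := algebraMap (Polynomial ℂ) (RatFunc ℂ) p with hPdef
  set qinvP : Submodule ℂ (Fin r → RatFunc ℂ) := scaleSub r Q⁻¹ (polySubmodule r) with hqinvdef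
  have hWsub : scaleSub r Q W ≤ polySubmodule r := by
    calc scaleSub r Q W ≤ scaleSub r Q (scaleSub r Q⁻¹ (polySubmodule r)) :=
          Submodule.map_mono hWq
    _ = scaleSub r (Q * Q⁻¹) (polySubmodule r) := scaleSub_scaleSub r Q Q⁻¹ _
    _ = polySubmodule r := by rw [mul_inv_cancel₀ hQ, scaleSub_one]
  set U' : Submodule ℂ (Fin r → Polynomial ℂ) :=
    Submodule.comap (polyToRat r) (scaleSub r Q W) with hU'def
  have hmapU' : Submodule.map (polyToRat r) U' = scaleSub r Q W := by
    rw [hU'def, Submodule.map_comap_eq]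
    exact inf_eq_right.mpr hWsub
  set m : Polynomial ℂ := q * p with hmdef
  have hm : m ≠ 0 := mul_ne_zero hq hp
  have hmU' : ∀ f, polyScale r m f ∈ U' := by
    intro f
    rw [hU'def, Submodule.mem_comap, polyToRat_polyScale]
    have hQP : algebraMap (Polynomial ℂ) (RatFunc ℂ) m = Q * Pp := by
      rw [hmdef, map_mul]
    rw [hQP, ← ratScale_ratScale]
    exact Submodule.mem_map_of_mem
      (hpW (Submodule.mem_map_of_mem (LinearMap.mem_range_self _ f)))
  set C : Submodule ℂ (Module.Dual ℂ (Fin r → Polynomial ℂ)) :=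
    Submodule.span ℂ (Set.range (Efam r m)) ⊓ U'.dualAnnihilator with hCdef
  have hCspan : C ≤ conditionsSpace r := inf_le_left.trans (Efam_mem_conditions r m)
  have hCfd : FiniteDimensional ℂ C := by
    have : FiniteDimensional ℂ (Submodule.span ℂ (Set.range (Efam r m))) :=
      FiniteDimensional.span_of_finite ℂ (Set.finite_range (Efam r m))
    exact Submodule.finiteDimensional_of_le inf_le_left
  have hann : annihilatorOfConditions r C = U' := by
    ext f
    rw [mem_annihilatorOfConditions]
    constructor
    · intro hf
      by_contra hfU
      have hne : U'.mkQ f ≠ 0 := by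
        rwa [Ne, Submodule.mkQ_apply, Submodule.Quotient.mk_eq_zero]
      obtain ⟨ψ, hψ⟩ : ∃ ψ : Module.Dual ℂ ((Fin r → Polynomial ℂ) ⧸ U'),
          ψ (U'.mkQ f) ≠ 0 := by
        by_contra hall
        push_neg at hall
        exact hne ((Module.forall_dual_apply_eq_zero_iff ℂ _).mp hall)
      have hc0 : ∀ u ∈ U', (ψ ∘ₗ U'.mkQ) u = 0 := by
        intro u hu
        simp [Submodule.mkQ_apply, (Submodule.Quotient.mk_eq_zero _).mpr hu]
      have hcC : ψ ∘ₗ U'.mkQ ∈ C :=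
        Submodule.mem_inf.mpr ⟨aux_claimA r m hm U' hmU' _ hc0,
          (Submodule.mem_dualAnnihilator _).mpr hc0⟩
      exact hψ (hf _ hcC)
    · intro hf c hc
      exact (Submodule.mem_dualAnnihilator _).mp (Submodule.mem_inf.mp hc).2 f hf
  have hratann : annihilatorInRat r C = scaleSub r Q W := by
    rw [annihilatorInRat, hann, hmapU']
  refine ⟨C, hCspan, hCfd, ?_, hratann.symm, ?_⟩
  · rw [hratann, scaleSub_scaleSub, inv_mul_cancel₀ hQ, scaleSub_one]
  -- finrank part
  · have hvan : ∀ c : C, U' ≤ LinearMap.ker (c : Module.Dual ℂ (Fin r → Polynomial ℂ)) := by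
      intro c u hu
      exact LinearMap.mem_ker.mpr
        ((Submodule.mem_dualAnnihilator _).mp (Submodule.mem_inf.mp c.2).2 u hu)
    let β : C →ₗ[ℂ] Module.Dual ℂ ((Fin r → Polynomial ℂ) ⧸ U') :=
      { toFun := fun c => U'.liftQ c.1 (hvan c)
        map_add' := by
          intro c c'
          refine Submodule.linearMap_qext _ ?_
          ext f
          simp
        map_smul' := by
          intro a c
          refine Submodule.linearMap_qext _ ?_
          ext f
          simp }
    have hβinj : Function.Injective β := by
      intro c c' h
      apply Subtype.ext
      apply LinearMap.ext
      intro f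
      have h2 := congrArg (fun g => g (U'.mkQ f)) h
      simpa [β, Submodule.liftQ_apply] using h2
    have hβsurj : Function.Surjective β := by
      intro g
      have hc0 : ∀ u ∈ U', (g ∘ₗ U'.mkQ) u = 0 := by
        intro u hu
        simp [Submodule.mkQ_apply, (Submodule.Quotient.mk_eq_zero _).mpr hu]
      refine ⟨⟨g ∘ₗ U'.mkQ, Submodule.mem_inf.mpr
        ⟨aux_claimA r m hm U' hmU' _ hc0, (Submodule.mem_dualAnnihilator _).mpr hc0⟩⟩, ?_⟩
      refine Submodule.linearMap_qext _ ?_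
      ext f
      simp [β, Submodule.liftQ_apply]
    let eβ := LinearEquiv.ofBijective β ⟨hβinj, hβsurj⟩
    have hfdDual : FiniteDimensional ℂ (Module.Dual ℂ ((Fin r → Polynomial ℂ) ⧸ U')) :=
      Module.Finite.equiv eβ
    have hfdVq : FiniteDimensional ℂ ((Fin r → Polynomial ℂ) ⧸ U') :=
      FiniteDimensional.of_injective (Module.Dual.eval ℂ _) (Module.eval_apply_injective ℂ)
    have h1 : Module.finrank ℂ C = Module.finrank ℂ ((Fin r → Polynomial ℂ) ⧸ U') := by
      rw [eβ.finrank_eq, Subspace.dual_finrank_eq]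
    have hQx : ∀ x : qinvP, ratScale r Q (x : Fin r → RatFunc ℂ) ∈ polySubmodule r := by
      intro x
      have hx : ratScale r Q (x : Fin r → RatFunc ℂ)
          ∈ scaleSub r Q (scaleSub r Q⁻¹ (polySubmodule r)) :=
        Submodule.mem_map_of_mem x.2
      rw [scaleSub_scaleSub, mul_inv_cancel₀ hQ, scaleSub_one] at hx
      exact hx
    let eP : (Fin r → Polynomial ℂ) ≃ₗ[ℂ] polySubmodule r :=
      LinearEquiv.ofInjective (polyToRat r) (polyToRat_injective r)
    let g0 : qinvP →ₗ[ℂ] (Fin r → Polynomial ℂ) :=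
      eP.symm.toLinearMap ∘ₗ
        ((ratScale r Q ∘ₗ qinvP.subtype).codRestrict (polySubmodule r) hQx)
    have hg0 : ∀ x : qinvP,
        polyToRat r (g0 x) = ratScale r Q (x : Fin r → RatFunc ℂ) := by
      intro x
      have hz : (⟨ratScale r Q (x : Fin r → RatFunc ℂ), hQx x⟩ : polySubmodule r)
          = eP (eP.symm ⟨ratScale r Q (x : Fin r → RatFunc ℂ), hQx x⟩) :=
        (eP.apply_symm_apply _).symm
      calc polyToRat r (g0 x)
          = ↑(eP (eP.symm ⟨ratScale r Q (x : Fin r → RatFunc ℂ), hQx x⟩)) :=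
            (LinearEquiv.ofInjective_apply (f := polyToRat r) (h := polyToRat_injective r)
              (eP.symm ⟨ratScale r Q (x : Fin r → RatFunc ℂ), hQx x⟩)).symm
        _ = ratScale r Q (x : Fin r → RatFunc ℂ) := by rw [← hz]
    let Φ : qinvP →ₗ[ℂ] ((Fin r → Polynomial ℂ) ⧸ U') := U'.mkQ ∘ₗ g0
    have hΦsurj : Function.Surjective Φ := by
      intro y
      obtain ⟨f, rfl⟩ := Submodule.mkQ_surjective U' y
      have hmem : ratScale r Q⁻¹ (polyToRat r f) ∈ qinvP := by
        rw [hqinvdef]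
        exact Submodule.mem_map_of_mem ⟨f, rfl⟩
      refine ⟨⟨ratScale r Q⁻¹ (polyToRat r f), hmem⟩, ?_⟩
      have hx : polyToRat r (g0 ⟨ratScale r Q⁻¹ (polyToRat r f), hmem⟩)
          = polyToRat r f := by
        rw [hg0]
        show ratScale r Q (ratScale r Q⁻¹ (polyToRat r f)) = _
        rw [ratScale_ratScale, mul_inv_cancel₀ hQ, ratScale_one]
      have heq := polyToRat_injective r hx
      show U'.mkQ _ = U'.mkQ f
      rw [heq]
    have hΦker : LinearMap.ker Φ = Submodule.comap qinvP.subtype W := by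
      ext x
      rw [LinearMap.mem_ker, Submodule.mem_comap]
      constructor
      · intro h
        have hg0U : g0 x ∈ U' := by
          rw [← Submodule.Quotient.mk_eq_zero U']
          exact h
        have hmm : polyToRat r (g0 x) ∈ Submodule.map (polyToRat r) U' :=
          Submodule.mem_map_of_mem hg0U
        rw [hmapU', hg0] at hmm
        obtain ⟨w', hw, hww⟩ := hmm
        have heq := ratScale_injective r hQ hww
        show (x : Fin r → RatFunc ℂ) ∈ W
        exact heq ▸ hw
      · intro h
        have hmm : ratScale r Q (x : Fin r → RatFunc ℂ) ∈ scaleSub r Q W :=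
          Submodule.mem_map_of_mem h
        rw [← hg0, ← hmapU'] at hmm
        obtain ⟨u, hu, huu⟩ := hmm
        have heq : u = g0 x := polyToRat_injective r huu
        rw [heq] at hu
        show U'.mkQ (g0 x) = 0
        rwa [Submodule.mkQ_apply, Submodule.Quotient.mk_eq_zero]
    have e2 := LinearMap.quotKerEquivOfSurjective Φ hΦsurj
    rw [hΦker] at e2
    rw [h1]
    exact e2.finrank_eq.symm
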